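/- Consider the sequence X_0 = n, X_{n+1} = 0, and for 1 ≤ i ≤ n, conditionally on X_{i-1}: X_i = e^n · X_{i-1} with probability e^{-n} and X_i = 0 with probability 1 − e^{-n}. Then E[X_i] = n for all 0 ≤ i ≤ n, the algorithm that stops at the first index i where min(X_0,...,X_i) ≤ i incurs expected cost at least n, while the policy that queries until seeing 0 has expected cost O(1) (at most e^{-n}·Σ_{i=1}^{n+1} i + 1 plus lower order terms, which is bounded by a constant independent of n). -/

import Mathlib

open Finset

/-- Probability that the first zero of the sequence occurs at step `ω`
(`ω = n+1` encodes "no zero among `X_1,…,X_n`"; recall `X_{n+1} = 0`). -/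
noncomputable def P5 (n ω : ℕ) : ℝ :=
  if ω ≤ n then (1 - Real.exp (-(n : ℝ))) * Real.exp (-(((ω : ℝ) - 1) * (n : ℝ)))
  else if ω = n + 1 then Real.exp (-((n : ℝ) * (n : ℝ))) else 0

/-- Value of `X_i` (for `i ≤ n`) on the outcome with first zero at `ω`:
`X_i = n·e^{i n}` before the first zero, `0` afterwards (`X_0 = n`). -/
noncomputable def X5 (n i ω : ℕ) : ℝ :=
  if i < ω then (n : ℝ) * Real.exp ((i : ℝ) * (n : ℝ)) else 0

/-- Expected cost of the RevisedSkiRental algorithm on this instance: it stops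
paying `ω` when the first zero appears at step `ω ≤ n`, and otherwise stops at
index `n` paying `n + X_n`. -/
noncomputable def ERev5 (n : ℕ) : ℝ :=
  ∑ ω ∈ Finset.Icc 1 (n + 1),
    P5 n ω * (if ω ≤ n then (ω : ℝ) else (n : ℝ) + (n : ℝ) * Real.exp ((n : ℝ) * (n : ℝ)))

/-- Expected cost of the policy that queries until seeing a zero. -/
noncomputable def EOpt5 (n : ℕ) : ℝ :=
  ∑ ω ∈ Finset.Icc 1 (n + 1), P5 n ω * (ω : ℝ)

lemma P5_nonneg (n ω : ℕ) : 0 ≤ P5 n ω := by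
  unfold P5
  split_ifs with h1 h2
  · have hr : Real.exp (-(n : ℝ)) ≤ 1 :=
      Real.exp_le_one_iff.mpr (neg_nonpos.mpr (Nat.cast_nonneg n))
    exact mul_nonneg (by linarith) (Real.exp_pos _).le
  · exact (Real.exp_pos _).le
  · exact le_rfl

lemma EX5 (n : ℕ) (hn : 1 ≤ n) (i : ℕ) (hi : i ≤ n) :
    ∑ ω ∈ Finset.Icc 1 (n + 1), P5 n ω * X5 n i ω = (n : ℝ) := by
  rw [Finset.sum_Icc_succ_top (by omega : 1 ≤ n + 1)]
  have htop : P5 n (n + 1) * X5 n i (n + 1)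
      = Real.exp (-((n : ℝ) * n)) * ((n : ℝ) * Real.exp ((i : ℝ) * n)) := by
    unfold P5 X5
    rw [if_neg (by omega), if_pos rfl, if_pos (by omega)]
  have hIcc : Finset.Icc 1 n = Finset.Ioc 0 n := by
    rw [← Finset.Icc_add_one_left_eq_Ioc]; rfl
  rw [htop, hIcc, ← Finset.sum_Ioc_consecutive _ (Nat.zero_le i) hi]
  have h1 : ∑ ω ∈ Finset.Ioc 0 i, P5 n ω * X5 n i ω = 0 := by
    apply Finset.sum_eq_zero
    intro ω hω
    rw [Finset.mem_Ioc] at hω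
    unfold X5
    rw [if_neg (by omega)]
    ring
  have h2 : ∑ ω ∈ Finset.Ioc i n, P5 n ω * X5 n i ω
      = (n : ℝ) * Real.exp ((i : ℝ) * n) *
        (Real.exp (-((i : ℝ) * n)) - Real.exp (-((n : ℝ) * n))) := by
    have hIoc : Finset.Ioc i n = Finset.Ico (i + 1) (n + 1) := by
      rw [Finset.Ico_add_one_right_eq_Icc, Finset.Icc_add_one_left_eq_Ioc]
    rw [hIoc, Finset.sum_Ico_eq_sum_range]
    have hcard : n + 1 - (i + 1) = n - i := by omega
    rw [hcard]
    have hstep : ∀ k ∈ Finset.range (n - i),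
        P5 n (i + 1 + k) * X5 n i (i + 1 + k)
        = (n : ℝ) * Real.exp ((i : ℝ) * n) *
          ((fun m : ℕ => Real.exp (-(((i : ℝ) + m) * n))) k
            - (fun m : ℕ => Real.exp (-(((i : ℝ) + m) * n))) (k + 1)) := by
      intro k hk
      rw [Finset.mem_range] at hk
      unfold P5 X5
      rw [if_pos (by omega), if_pos (by omega)]
      simp only [Nat.cast_add, Nat.cast_one]
      have e1 : ((i : ℝ) + 1 + k - 1) = (i : ℝ) + k := by ring
      rw [e1, sub_mul, one_mul, ← Real.exp_add]
      ring_nf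
    rw [Finset.sum_congr rfl hstep, ← Finset.mul_sum,
      Finset.sum_range_sub' (fun m : ℕ => Real.exp (-(((i : ℝ) + m) * n))) (n - i)]
    have e2 : ((i : ℝ) + ((n - i : ℕ) : ℝ)) = (n : ℝ) := by
      rw [Nat.cast_sub hi]; ring
    simp only [Nat.cast_zero, add_zero, e2]
  rw [h1, h2]
  have e3 : Real.exp ((i : ℝ) * n) * Real.exp (-((i : ℝ) * n)) = 1 := by
    rw [← Real.exp_add]; simp
  linear_combination (n : ℝ) * e3

lemma ERev5_ge (n : ℕ) (hn : 1 ≤ n) : (n : ℝ) ≤ ERev5 n := by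
  unfold ERev5
  rw [Finset.sum_Icc_succ_top (by omega : 1 ≤ n + 1)]
  have htop : P5 n (n + 1) *
      (if n + 1 ≤ n then ((n + 1 : ℕ) : ℝ)
       else (n : ℝ) + (n : ℝ) * Real.exp ((n : ℝ) * n))
      = (n : ℝ) * Real.exp (-((n : ℝ) * n)) + n := by
    unfold P5
    rw [if_neg (by omega), if_pos rfl, if_neg (by omega)]
    have e1 : Real.exp (-((n : ℝ) * n)) * Real.exp ((n : ℝ) * n) = 1 := by
      rw [← Real.exp_add]; simp
    linear_combination (n : ℝ) * e1
  rw [htop]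
  have hs : 0 ≤ ∑ ω ∈ Finset.Icc 1 n,
      P5 n ω * (if ω ≤ n then (ω : ℝ)
        else (n : ℝ) + (n : ℝ) * Real.exp ((n : ℝ) * n)) := by
    apply Finset.sum_nonneg
    intro ω hω
    apply mul_nonneg (P5_nonneg n ω)
    split_ifs
    · exact Nat.cast_nonneg ω
    · positivity
  have hp : 0 ≤ (n : ℝ) * Real.exp (-((n : ℝ) * n)) := by positivity
  linarith

lemma EOpt5_le (n : ℕ) (hn : 1 ≤ n) : EOpt5 n ≤ (1 - 2 / Real.exp 1)⁻¹ := by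
  have he : (2 : ℝ) < Real.exp 1 := by
    have := Real.exp_one_gt_d9; linarith
  set q : ℝ := 2 / Real.exp 1 with hq
  have hq0 : 0 ≤ q := by positivity
  have hq1 : q < 1 := by
    rw [hq, div_lt_one (Real.exp_pos 1)]; exact he
  have hterm : ∀ ω ∈ Finset.Icc 1 (n + 1), P5 n ω * (ω : ℝ) ≤ q ^ (ω - 1) := by
    intro ω hω
    rw [Finset.mem_Icc] at hω
    have hω1 : (1 : ℝ) ≤ (ω : ℝ) := by exact_mod_cast hω.1
    have hn1 : (1 : ℝ) ≤ (n : ℝ) := by exact_mod_cast hn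
    have hcast : ((ω - 1 : ℕ) : ℝ) = (ω : ℝ) - 1 := by
      rw [Nat.cast_sub hω.1]; norm_num
    have hP : P5 n ω ≤ Real.exp (-1) ^ (ω - 1) := by
      have hpow : Real.exp (-1) ^ (ω - 1) = Real.exp (-((ω : ℝ) - 1)) := by
        rw [← Real.exp_nat_mul, hcast]; ring_nf
      unfold P5
      split_ifs with h1 h2
      · have hmono : Real.exp (-(((ω : ℝ) - 1) * n)) ≤ Real.exp (-((ω : ℝ) - 1)) := by
          apply Real.exp_le_exp.mpr
          nlinarith
        have hr : Real.exp (-(n : ℝ)) ≤ 1 :=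
          Real.exp_le_one_iff.mpr (neg_nonpos.mpr (Nat.cast_nonneg n))
        rw [hpow]
        calc (1 - Real.exp (-(n : ℝ))) * Real.exp (-(((ω : ℝ) - 1) * n))
            ≤ 1 * Real.exp (-(((ω : ℝ) - 1) * n)) :=
              mul_le_mul_of_nonneg_right (by have := Real.exp_pos (-(n : ℝ)); linarith) (Real.exp_pos _).le
          _ = Real.exp (-(((ω : ℝ) - 1) * n)) := one_mul _
          _ ≤ Real.exp (-((ω : ℝ) - 1)) := hmono
      · rw [hpow]
        apply Real.exp_le_exp.mpr
        have : ((ω : ℝ)) = (n : ℝ) + 1 := by exact_mod_cast congrArg (Nat.cast (R := ℝ)) h2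
        rw [this]
        nlinarith
      · exact pow_nonneg (Real.exp_pos _).le _
    have hω2 : (ω : ℝ) ≤ 2 ^ (ω - 1) := by
      have h : ω ≤ 2 ^ (ω - 1) := by
        obtain ⟨k, rfl⟩ : ∃ k, ω = k + 1 := ⟨ω - 1, by omega⟩
        simpa using (Nat.lt_two_pow_self (n := k))
      calc (ω : ℝ) ≤ ((2 ^ (ω - 1) : ℕ) : ℝ) := by exact_mod_cast h
        _ = 2 ^ (ω - 1) := by push_cast; ring
    calc P5 n ω * (ω : ℝ) ≤ Real.exp (-1) ^ (ω - 1) * 2 ^ (ω - 1) :=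
          mul_le_mul hP hω2 (by positivity) (pow_nonneg (Real.exp_pos _).le _)
      _ = q ^ (ω - 1) := by
          rw [← mul_pow, hq, Real.exp_neg]
          congr 1
          field_simp
  calc EOpt5 n ≤ ∑ ω ∈ Finset.Icc 1 (n + 1), q ^ (ω - 1) :=
        Finset.sum_le_sum hterm
    _ = ∑ k ∈ Finset.range (n + 1), q ^ k := by
        rw [show Finset.Icc 1 (n + 1) = Finset.Ico 1 (n + 2) from (Finset.Ico_add_one_right_eq_Icc 1 (n+1)).symm]
        rw [Finset.sum_Ico_eq_sum_range]
        simp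
    _ ≤ ∑' k : ℕ, q ^ k :=
        Summable.sum_le_tsum _ (fun k _ => pow_nonneg hq0 k) (summable_geometric_of_lt_one hq0 hq1)
    _ = (1 - q)⁻¹ := tsum_geometric_of_lt_one hq0 hq1

/-- `RevisedSkiRental` fails for super-martingale stopping: `E[X_i] = n` for all
`0 ≤ i ≤ n`, the revised algorithm has expected cost at least `n`, while the
query-until-zero policy has expected cost bounded by an absolute constant. -/
theorem revised_ski_rental_not_competitive :
    (∀ n : ℕ, 1 ≤ n → ∀ i ≤ n,
        ∑ ω ∈ Finset.Icc 1 (n + 1), P5 n ω * X5 n i ω = (n : ℝ)) ∧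
    (∀ n : ℕ, 1 ≤ n → (n : ℝ) ≤ ERev5 n) ∧
    (∃ C : ℝ, ∀ n : ℕ, 1 ≤ n → EOpt5 n ≤ C) := by
  exact ⟨fun n hn i hi => EX5 n hn i hi, fun n hn => ERev5_ge n hn,
    ⟨(1 - 2 / Real.exp 1)⁻¹, fun n hn => EOpt5_le n hn⟩⟩
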